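/- Consider one inner loop of SARAH (SARAH-IN) with each f_i L-smooth and learning rate exactly η = 2 / ( L ( sqrt(1 + (4m/b)·((n−b)/(n−1))) + 1 ) ). If the output w̃ equals w_t with t chosen uniformly at random from {0,1,...,m}, then E[||∇P(w̃)||²] ≤ ( L ( sqrt(1 + (4m/b)·((n−b)/(n−1))) + 1 ) / (m+1) ) · [P(w_0) − P(w_*)], where w_* is a global minimizer of P. -/

import Mathlib

open scoped BigOperators

noncomputable section

/-- Vectors in `ℝ^d`. -/
abbrev Vec (d : ℕ) := EuclideanSpace ℝ (Fin d)

/-- The type of mini-batches of size `b` from `{1,…,n}` (modeled as `Fin n`). -/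
def Batch (n b : ℕ) : Type := {s : Finset (Fin n) // s.card = b}

instance (n b : ℕ) : Fintype (Batch n b) :=
  inferInstanceAs (Fintype {s : Finset (Fin n) // s.card = b})

/-- Expectation (uniform average) over a finite sample space. -/
def expec {Ω : Type*} [Fintype Ω] (F : Ω → ℝ) : ℝ :=
  (Fintype.card Ω : ℝ)⁻¹ * ∑ ω, F ω

/-- The SARAH-IN state `(w_t, v_t)` given a starting point `w0`, a learning rate `η`,
a batch size `b` and a sequence of mini-batches `I` (where `I t` is the batch used to
form `v_t`, for `t ≥ 1`). -/
def sarahState {d n : ℕ} (f : Fin n → Vec d → ℝ) (w0 : Vec d) (η : ℝ) (b : ℕ)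
    (I : ℕ → Finset (Fin n)) : ℕ → Vec d × Vec d
  | 0 => (w0, (n : ℝ)⁻¹ • ∑ i, gradient (f i) w0)
  | t + 1 =>
    let p := sarahState f w0 η b I t
    let w' := p.1 - η • p.2
    (w', (b : ℝ)⁻¹ • ∑ i ∈ I (t + 1), (gradient (f i) w' - gradient (f i) p.1) + p.2)

/-- Extend a finite sequence of mini-batches to all of `ℕ` (indices `≥ T` are irrelevant). -/
def pad {n b T : ℕ} (ω : Fin T → Batch n b) : ℕ → Finset (Fin n) :=
  fun t => if h : t < T then (ω ⟨t, h⟩).1 else ∅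

open Finset

local notation "⟪" x ", " y "⟫" => @inner ℝ _ _ x y

section aux


lemma count_mem {n b : ℕ} (hb : 1 ≤ b) (i : Fin n) :
    ((powersetCard b (univ : Finset (Fin n))).filter (fun s => i ∈ s)).card
      = (n-1).choose (b-1) := by
  have hcard : ((univ : Finset (Fin n)).erase i).card = n - 1 := by
    rw [card_erase_of_mem (mem_univ i), card_univ, Fintype.card_fin]
  rw [← hcard, ← Finset.card_powersetCard (b-1) ((univ : Finset (Fin n)).erase i)]
  apply Finset.card_bij (fun s _ => s.erase i)
  · intro s hs
    simp only [mem_filter, mem_powersetCard_univ] at hs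
    rw [mem_powersetCard]
    exact ⟨erase_subset_erase i (subset_univ s), by rw [card_erase_of_mem hs.2, hs.1]⟩
  · intro s hs t ht h
    simp only [mem_filter, mem_powersetCard_univ] at hs ht
    rw [← insert_erase hs.2, ← insert_erase ht.2, h]
  · intro t ht
    rw [mem_powersetCard] at ht
    have hi : i ∉ t := fun h => (mem_erase.mp (ht.1 h)).1 rfl
    refine ⟨insert i t, ?_, by rw [erase_insert hi]⟩
    simp only [mem_filter, mem_powersetCard_univ]
    exact ⟨by rw [card_insert_of_notMem hi, ht.2, Nat.sub_add_cancel hb], mem_insert_self i t⟩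

lemma count_pair {n b : ℕ} (hb : 2 ≤ b) {i j : Fin n} (hij : i ≠ j) :
    ((powersetCard b (univ : Finset (Fin n))).filter (fun s => i ∈ s ∧ j ∈ s)).card
      = (n-2).choose (b-2) := by
  have hji : j ∈ (univ : Finset (Fin n)).erase i := mem_erase.mpr ⟨hij.symm, mem_univ j⟩
  have hcard : (((univ : Finset (Fin n)).erase i).erase j).card = n - 2 := by
    rw [card_erase_of_mem hji, card_erase_of_mem (mem_univ i), card_univ, Fintype.card_fin]
    omega
  rw [← hcard, ← Finset.card_powersetCard (b-2) (((univ : Finset (Fin n)).erase i).erase j)]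
  apply Finset.card_bij (fun s _ => (s.erase i).erase j)
  · intro s hs
    simp only [mem_filter, mem_powersetCard_univ] at hs
    rw [mem_powersetCard]
    constructor
    · exact erase_subset_erase j (erase_subset_erase i (subset_univ s))
    · rw [card_erase_of_mem (mem_erase.mpr ⟨hij.symm, hs.2.2⟩), card_erase_of_mem hs.2.1, hs.1]
      omega
  · intro s hs t ht h
    simp only [mem_filter, mem_powersetCard_univ] at hs ht
    have h2 : s.erase i = t.erase i := by
      rw [← insert_erase (mem_erase.mpr ⟨hij.symm, hs.2.2⟩),
        ← insert_erase (mem_erase.mpr ⟨hij.symm, ht.2.2⟩), h]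
    rw [← insert_erase hs.2.1, ← insert_erase ht.2.1, h2]
  · intro t ht
    rw [mem_powersetCard] at ht
    have hjt : j ∉ t := fun h => (mem_erase.mp (ht.1 h)).1 rfl
    have hit : i ∉ t := fun h => (mem_erase.mp (mem_of_mem_erase (ht.1 h))).1 rfl
    have hii : i ∉ insert j t := by
      simp only [mem_insert]; push_neg; exact ⟨hij, hit⟩
    refine ⟨insert i (insert j t), ?_, ?_⟩
    · simp only [mem_filter, mem_powersetCard_univ]
      refine ⟨?_, mem_insert_self i _, mem_insert_of_mem (mem_insert_self j t)⟩
      rw [card_insert_of_notMem hii, card_insert_of_notMem hjt, ht.2]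
      omega
    · rw [erase_insert hii, erase_insert hjt]

lemma count_pair_one {n : ℕ} {i j : Fin n} (hij : i ≠ j) :
    ((powersetCard 1 (univ : Finset (Fin n))).filter (fun s => i ∈ s ∧ j ∈ s)).card = 0 := by
  rw [card_eq_zero, filter_eq_empty_iff]
  intro s hs ⟨hi, hj⟩
  rw [mem_powersetCard_univ, card_eq_one] at hs
  obtain ⟨a, rfl⟩ := hs
  simp only [mem_singleton] at hi hj
  exact hij (hi.trans hj.symm)

-- real coefficient identities
lemma count_mem_real {n b : ℕ} (hn : 1 ≤ n) (hb : 1 ≤ b) :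
    (((n-1).choose (b-1) : ℝ)) * n = (n.choose b : ℝ) * b := by
  obtain ⟨n', rfl⟩ : ∃ n', n = n' + 1 := ⟨n - 1, by omega⟩
  obtain ⟨b', rfl⟩ : ∃ b', b = b' + 1 := ⟨b - 1, by omega⟩
  simp only [Nat.add_sub_cancel]
  have := congrArg (fun x : ℕ => (x : ℝ)) (Nat.add_one_mul_choose_eq n' b')
  push_cast at this
  push_cast
  linarith

lemma count_pair_real {n b : ℕ} (hn : 2 ≤ n) (hb : 2 ≤ b) :
    (((n-2).choose (b-2) : ℝ)) * (n * (n-1)) = (n.choose b : ℝ) * (b * (b-1)) := by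
  obtain ⟨n', rfl⟩ : ∃ n', n = n' + 2 := ⟨n - 2, by omega⟩
  obtain ⟨b', rfl⟩ : ∃ b', b = b' + 2 := ⟨b - 2, by omega⟩
  simp only [Nat.add_sub_cancel]
  have h1 := Nat.add_one_mul_choose_eq (n'+1) (b'+1)
  have h2 := Nat.add_one_mul_choose_eq n' b'
  have key : (n'+2) * ((n'+1) * Nat.choose n' b') = Nat.choose (n'+2) (b'+2) * ((b'+2) * (b'+1)) := by
    calc (n'+2) * ((n'+1) * Nat.choose n' b') = (n'+2) * ((n'+1) * Nat.choose n' b') := rfl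
      _ = _ := by
          rw [show (n'+1) * Nat.choose n' b' = Nat.choose (n'+1) (b'+1) * (b'+1) from h2,
            show (n'+2) * (Nat.choose (n'+1) (b'+1) * (b'+1)) = ((n'+2) * Nat.choose (n'+1) (b'+1)) * (b'+1) by ring,
            show (n'+2) * Nat.choose (n'+1) (b'+1) = Nat.choose (n'+2) (b'+2) * (b'+2) from h1]
          ring
  have := congrArg (fun x : ℕ => (x : ℝ)) key
  push_cast at this
  push_cast
  linarith


variable {n b d : ℕ}

lemma sum_batch (F : Finset (Fin n) → ℝ) :
    ∑ s : Batch n b, F s.1 = ∑ s ∈ powersetCard b (univ : Finset (Fin n)), F s :=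
  (Finset.sum_subtype _ (fun _ => mem_powersetCard_univ) F).symm

lemma card_batch : Fintype.card (Batch n b) = n.choose b := by
  rw [show Fintype.card (Batch n b) = Fintype.card {s : Finset (Fin n) // s.card = b} from rfl,
    Fintype.card_subtype, ← Finset.powerset_univ, ← powersetCard_eq_filter, card_powersetCard, card_univ, Fintype.card_fin]

lemma batch_nonempty (hbn : b ≤ n) : Nonempty (Batch n b) := by
  obtain ⟨t, _, ht⟩ := Finset.exists_subset_card_eq (by simpa using hbn :
    b ≤ (univ : Finset (Fin n)).card)
  exact ⟨⟨t, ht⟩⟩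

lemma sum_mem_swap (g : Fin n → ℝ) (hb : 1 ≤ b) :
    ∑ s ∈ powersetCard b (univ : Finset (Fin n)), ∑ i ∈ s, g i
      = ((n-1).choose (b-1) : ℝ) * ∑ i, g i := by
  have h1 : ∀ s ∈ powersetCard b (univ : Finset (Fin n)), ∑ i ∈ s, g i
      = ∑ i, if i ∈ s then g i else 0 := by
    intro s _
    rw [Finset.sum_ite_mem, univ_inter]
  rw [sum_congr rfl h1, Finset.sum_comm, Finset.mul_sum]
  refine sum_congr rfl fun i _ => ?_
  rw [← Finset.sum_filter, Finset.sum_const, count_mem hb i, nsmul_eq_mul]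

lemma sum_pair_swap (h : Fin n → Fin n → ℝ) :
    ∑ s ∈ powersetCard b (univ : Finset (Fin n)), ∑ i ∈ s, ∑ j ∈ s.erase i, h i j
      = ∑ i, ∑ j ∈ (univ : Finset (Fin n)).erase i,
          ((((powersetCard b (univ : Finset (Fin n))).filter
            (fun s => i ∈ s ∧ j ∈ s)).card : ℝ)) * h i j := by
  have h1 : ∀ s ∈ powersetCard b (univ : Finset (Fin n)), ∑ i ∈ s, ∑ j ∈ s.erase i, h i j
      = ∑ i, ∑ j ∈ (univ : Finset (Fin n)).erase i,
          if i ∈ s ∧ j ∈ s then h i j else 0 := by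
    intro s _
    rw [show (∑ i ∈ s, ∑ j ∈ s.erase i, h i j)
        = ∑ i, if i ∈ s then ∑ j ∈ s.erase i, h i j else 0 by
      rw [Finset.sum_ite_mem, univ_inter]]
    refine sum_congr rfl fun i _ => ?_
    by_cases hi : i ∈ s
    · simp only [hi, if_true, true_and]
      rw [show s.erase i = ((univ : Finset (Fin n)).erase i) ∩ s by
        ext x; simp [mem_erase, and_comm], ← Finset.sum_ite_mem]
    · simp [hi]
  rw [sum_congr rfl h1, Finset.sum_comm]
  refine sum_congr rfl fun i _ => ?_
  rw [Finset.sum_comm]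
  refine sum_congr rfl fun j _ => ?_
  rw [← Finset.sum_filter, Finset.sum_const, nsmul_eq_mul]

end aux

section probability

variable {n b d : ℕ}

lemma expec_add {Ω : Type*} [Fintype Ω] (F G : Ω → ℝ) :
    expec (fun ω => F ω + G ω) = expec F + expec G := by
  simp only [expec, Finset.sum_add_distrib, mul_add]

lemma expec_sub {Ω : Type*} [Fintype Ω] (F G : Ω → ℝ) :
    expec (fun ω => F ω - G ω) = expec F - expec G := by
  simp only [expec, Finset.sum_sub_distrib, mul_sub]

lemma expec_const {Ω : Type*} [Fintype Ω] [Nonempty Ω] (a : ℝ) :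
    expec (fun _ : Ω => a) = a := by
  have h : (Fintype.card Ω : ℝ) ≠ 0 := by
    exact_mod_cast Fintype.card_ne_zero
  simp only [expec, Finset.sum_const, Finset.card_univ, nsmul_eq_mul]
  rw [inv_mul_cancel_left₀ h]

lemma expec_mul_left {Ω : Type*} [Fintype Ω] (r : ℝ) (F : Ω → ℝ) :
    expec (fun ω => r * F ω) = r * expec F := by
  simp only [expec, ← Finset.mul_sum]; ring

lemma expec_mono {Ω : Type*} [Fintype Ω] {F G : Ω → ℝ} (h : ∀ ω, F ω ≤ G ω) :
    expec F ≤ expec G := by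
  refine mul_le_mul_of_nonneg_left (Finset.sum_le_sum fun ω _ => h ω) ?_
  positivity

lemma expec_nonneg {Ω : Type*} [Fintype Ω] {F : Ω → ℝ} (h : ∀ ω, 0 ≤ F ω) :
    0 ≤ expec F := by
  have := expec_mono (F := fun _ : Ω => (0:ℝ)) (G := F) h
  simpa [expec] using this

lemma choose_ne_zero' {n b : ℕ} (hbn : b ≤ n) : ((n.choose b : ℝ)) ≠ 0 := by
  exact_mod_cast (Nat.choose_pos hbn).ne'

lemma hC1_real {n b : ℕ} (hb : 1 ≤ b) (hbn : b ≤ n) :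
    (((n-1).choose (b-1) : ℕ) : ℝ) = (n.choose b : ℝ) * b / n := by
  have hn : 1 ≤ n := hb.trans hbn
  have hn0 : (n:ℝ) ≠ 0 := by exact_mod_cast Nat.one_le_iff_ne_zero.mp hn
  have := count_mem_real (n := n) (b := b) hn hb
  field_simp
  linarith

/-- The real pair-count coefficient. -/
def c2R (n b : ℕ) : ℝ := if b ≤ 1 then 0 else (((n-2).choose (b-2) : ℕ) : ℝ)

lemma cnt_pair_eq (hb : 1 ≤ b) {i j : Fin n} (hij : i ≠ j) :
    ((((powersetCard b (univ : Finset (Fin n))).filter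
      (fun s => i ∈ s ∧ j ∈ s)).card : ℕ) : ℝ) = c2R n b := by
  rcases Nat.lt_or_ge b 2 with h1 | h2
  · have hb1 : b = 1 := by omega
    subst hb1
    rw [count_pair_one hij, c2R]
    simp
  · rw [count_pair h2 hij, c2R, if_neg (by omega)]

lemma hC2_real {n b : ℕ} (hb : 1 ≤ b) (hbn : b ≤ n) (hn : 2 ≤ n) :
    c2R n b = (n.choose b : ℝ) * (b * ((b:ℝ)-1)) / ((n:ℝ) * ((n:ℝ)-1)) := by
  have hn0 : (n:ℝ) ≠ 0 := by positivity
  have hn1 : (n:ℝ) - 1 ≠ 0 := by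
    have : (2:ℝ) ≤ n := by exact_mod_cast hn
    linarith
  rcases Nat.lt_or_ge b 2 with h1 | h2
  · have hb1 : b = 1 := by omega
    subst hb1
    rw [c2R, if_pos le_rfl]
    push_cast
    field_simp
    ring
  · rw [c2R, if_neg (by omega)]
    have := count_pair_real (n := n) (b := b) hn h2
    have hb1 : ((b:ℝ) - 1) = ((b-1 : ℕ) : ℝ) := by
      push_cast [Nat.cast_sub (by omega : 1 ≤ b)]; ring
    field_simp
    push_cast [Nat.cast_sub (by omega : 1 ≤ b)] at this ⊢
    linarith

lemma expec_batch_inner (hb : 1 ≤ b) (hbn : b ≤ n) (a : Vec d) (X : Fin n → Vec d) :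
    expec (fun s : Batch n b => ⟪a, (b:ℝ)⁻¹ • ∑ i ∈ s.1, X i⟫)
      = ⟪a, (n:ℝ)⁻¹ • ∑ i, X i⟫ := by
  have hn : 1 ≤ n := hb.trans hbn
  have hn0 : (n:ℝ) ≠ 0 := by exact_mod_cast Nat.one_le_iff_ne_zero.mp hn
  have hb0 : (b:ℝ) ≠ 0 := by exact_mod_cast Nat.one_le_iff_ne_zero.mp hb
  have hN0 := choose_ne_zero' hbn
  rw [expec, card_batch]
  rw [show (fun s : Batch n b => ⟪a, (b:ℝ)⁻¹ • ∑ i ∈ s.1, X i⟫)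
      = (fun s : Batch n b => (fun t : Finset (Fin n) =>
          (b:ℝ)⁻¹ * ∑ i ∈ t, ⟪a, X i⟫) s.1) by
    funext s
    rw [real_inner_smul_right, inner_sum]]
  rw [sum_batch (fun t : Finset (Fin n) => (b:ℝ)⁻¹ * ∑ i ∈ t, ⟪a, X i⟫),
    ← Finset.mul_sum, sum_mem_swap _ hb, real_inner_smul_right, inner_sum,
    hC1_real hb hbn]
  field_simp

lemma expec_batch_normsq (hb : 1 ≤ b) (hbn : b ≤ n) (hn : 2 ≤ n) (X : Fin n → Vec d) :
    expec (fun s : Batch n b => ‖(b:ℝ)⁻¹ • ∑ i ∈ s.1, X i‖^2)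
      = ‖(n:ℝ)⁻¹ • ∑ i, X i‖^2
        + ((n:ℝ)-b)/((b:ℝ)*((n:ℝ)-1))
          * ((n:ℝ)⁻¹ * ∑ i, ‖X i‖^2 - ‖(n:ℝ)⁻¹ • ∑ i, X i‖^2) := by
  have hn0 : (n:ℝ) ≠ 0 := by positivity
  have hb0 : (b:ℝ) ≠ 0 := by
    exact_mod_cast Nat.one_le_iff_ne_zero.mp hb
  have hn1 : (n:ℝ) - 1 ≠ 0 := by
    have : (2:ℝ) ≤ n := by exact_mod_cast hn
    linarith
  have hN0 := choose_ne_zero' hbn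
  -- diagonal/off-diagonal decomposition of the inner sum, for each batch s
  have hsq : ∀ s : Finset (Fin n), ‖(b:ℝ)⁻¹ • ∑ i ∈ s, X i‖^2
      = ((b:ℝ)⁻¹)^2 * ((∑ i ∈ s, ‖X i‖^2) + ∑ i ∈ s, ∑ j ∈ s.erase i, ⟪X i, X j⟫) := by
    intro s
    rw [norm_smul, mul_pow, ← real_inner_self_eq_norm_sq (∑ i ∈ s, X i), sum_inner]
    congr 1
    · rw [norm_inv, Real.norm_natCast]
    rw [← Finset.sum_add_distrib]
    refine Finset.sum_congr rfl fun i hi => ?_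
    rw [inner_sum, ← Finset.add_sum_erase _ _ hi, real_inner_self_eq_norm_sq]
  have hT : (∑ i, ∑ j ∈ (univ : Finset (Fin n)).erase i, ⟪X i, X j⟫)
      = ‖∑ i, X i‖^2 - ∑ i, ‖X i‖^2 := by
    have : ∀ i : Fin n, ∑ j ∈ (univ : Finset (Fin n)).erase i, ⟪X i, X j⟫
        = (∑ j, ⟪X i, X j⟫) - ‖X i‖^2 := by
      intro i
      rw [← Finset.add_sum_erase _ _ (mem_univ i), real_inner_self_eq_norm_sq]
      ring
    rw [Finset.sum_congr rfl fun i _ => this i, Finset.sum_sub_distrib]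
    congr 1
    rw [← real_inner_self_eq_norm_sq, sum_inner]
    exact Finset.sum_congr rfl fun i _ => by rw [inner_sum]
  rw [expec, card_batch]
  rw [show (fun s : Batch n b => ‖(b:ℝ)⁻¹ • ∑ i ∈ s.1, X i‖^2)
      = (fun s : Batch n b => (fun t : Finset (Fin n) =>
          ((b:ℝ)⁻¹)^2 * ((∑ i ∈ t, ‖X i‖^2) + ∑ i ∈ t, ∑ j ∈ t.erase i, ⟪X i, X j⟫)) s.1) by
    funext s
    exact hsq s.1]
  rw [sum_batch (fun t : Finset (Fin n) =>
      ((b:ℝ)⁻¹)^2 * ((∑ i ∈ t, ‖X i‖^2) + ∑ i ∈ t, ∑ j ∈ t.erase i, ⟪X i, X j⟫)),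
    ← Finset.mul_sum, Finset.sum_add_distrib, sum_mem_swap _ hb, sum_pair_swap]
  have hswap : (∑ i, ∑ j ∈ (univ : Finset (Fin n)).erase i,
        ((((powersetCard b (univ : Finset (Fin n))).filter
          (fun s => i ∈ s ∧ j ∈ s)).card : ℝ)) * ⟪X i, X j⟫)
      = c2R n b * (‖∑ i, X i‖^2 - ∑ i, ‖X i‖^2) := by
    rw [← hT, Finset.mul_sum]
    refine Finset.sum_congr rfl fun i _ => ?_
    rw [Finset.mul_sum]
    refine Finset.sum_congr rfl fun j hj => ?_
    rw [cnt_pair_eq hb (Finset.ne_of_mem_erase hj).symm]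
  rw [hswap, hC1_real hb hbn, hC2_real hb hbn hn]
  have hXbar : ‖(n:ℝ)⁻¹ • ∑ i, X i‖^2 = ((n:ℝ)⁻¹)^2 * ‖∑ i, X i‖^2 := by
    rw [norm_smul, mul_pow, norm_inv, Real.norm_natCast]
  rw [hXbar]
  field_simp
  ring

lemma batch_one_step (hb : 1 ≤ b) (hbn : b ≤ n) (hn : 2 ≤ n) (c v : Vec d)
    (X : Fin n → Vec d) :
    expec (fun s : Batch n b => ‖c - ((b:ℝ)⁻¹ • ∑ i ∈ s.1, X i + v)‖^2)
      = ‖c - ((n:ℝ)⁻¹ • ∑ i, X i + v)‖^2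
        + ((n:ℝ)-b)/((b:ℝ)*((n:ℝ)-1))
          * ((n:ℝ)⁻¹ * ∑ i, ‖X i‖^2 - ‖(n:ℝ)⁻¹ • ∑ i, X i‖^2) := by
  have hne : Nonempty (Batch n b) := batch_nonempty hbn
  have hexp : ∀ (Y : Vec d), ‖c - (Y + v)‖^2
      = ‖c - v‖^2 - 2 * ⟪c - v, Y⟫ + ‖Y‖^2 := by
    intro Y
    rw [show c - (Y + v) = (c - v) - Y by abel, norm_sub_sq_real]
  rw [show (fun s : Batch n b => ‖c - ((b:ℝ)⁻¹ • ∑ i ∈ s.1, X i + v)‖^2)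
      = (fun s : Batch n b => ‖c - v‖^2
          - 2 * ⟪c - v, (b:ℝ)⁻¹ • ∑ i ∈ s.1, X i⟫
          + ‖(b:ℝ)⁻¹ • ∑ i ∈ s.1, X i‖^2) by
    funext s
    exact hexp _]
  rw [expec_add, expec_sub, expec_const,
    show (fun s : Batch n b => 2 * ⟪c - v, (b:ℝ)⁻¹ • ∑ i ∈ s.1, X i⟫)
      = (fun s : Batch n b => 2 * (fun t : Batch n b =>
          ⟪c - v, (b:ℝ)⁻¹ • ∑ i ∈ t.1, X i⟫) s) from rfl,
    expec_mul_left, expec_batch_inner hb hbn, expec_batch_normsq hb hbn hn,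
    hexp ((n:ℝ)⁻¹ • ∑ i, X i)]
  ring

end probability

section analysis

variable {d n : ℕ}

lemma descent_lemma {g : Vec d → ℝ} {Lg : ℝ} (hLg : 0 ≤ Lg)
    (hdiff : Differentiable ℝ g)
    (hlip : ∀ x y : Vec d, ‖gradient g x - gradient g y‖ ≤ Lg * ‖x - y‖) (x y : Vec d) :
    g y ≤ g x + ⟪gradient g x, y - x⟫ + Lg / 2 * ‖y - x‖^2 := by
  have hgc : Continuous (gradient g) := by
    refine (lipschitzWith_iff_norm_sub_le.mpr fun a b' => ?_).continuous (K := Real.toNNReal Lg)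
    rw [Real.coe_toNNReal Lg hLg]
    exact hlip a b'
  set c : ℝ → Vec d := fun t => x + t • (y - x) with hc
  have hcc : Continuous c := by
    exact continuous_const.add (continuous_id.smul continuous_const)
  have hderiv : ∀ t : ℝ, HasDerivAt (fun u => g (c u)) ⟪gradient g (c t), y - x⟫ t := by
    intro t
    have h1 : HasDerivAt c (y - x) t := by
      simpa [hc] using ((hasDerivAt_id t).smul_const (y - x)).const_add x
    have h2 := (hdiff (c t)).hasGradientAt.hasFDerivAt
    have h3 := h2.comp_hasDerivAt t h1
    rw [InnerProductSpace.toDual_apply_apply] at h3; exact h3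
  have hcont : Continuous fun t => ⟪gradient g (c t), y - x⟫ :=
    Continuous.inner (hgc.comp hcc) continuous_const
  have heq : ∫ t in (0:ℝ)..1, ⟪gradient g (c t), y - x⟫ = g (c 1) - g (c 0) :=
    intervalIntegral.integral_eq_sub_of_hasDerivAt (fun t _ => hderiv t)
      (hcont.intervalIntegrable 0 1)
  have hc0 : c 0 = x := by simp [hc]
  have hc1 : c 1 = y := by simp [hc]
  have hmono : ∫ t in (0:ℝ)..1, ⟪gradient g (c t), y - x⟫
      ≤ ∫ t in (0:ℝ)..1, (⟪gradient g x, y - x⟫ + Lg * ‖y - x‖^2 * t) := by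
    refine intervalIntegral.integral_mono_on (by norm_num) (hcont.intervalIntegrable 0 1)
      ((continuous_const.add (continuous_const.mul continuous_id)).intervalIntegrable 0 1)
      fun t ht => ?_
    obtain ⟨ht0, ht1⟩ := ht
    have hsub : ⟪gradient g (c t), y - x⟫ - ⟪gradient g x, y - x⟫
        = ⟪gradient g (c t) - gradient g x, y - x⟫ := (inner_sub_left _ _ _).symm
    have hCS : ⟪gradient g (c t) - gradient g x, y - x⟫
        ≤ ‖gradient g (c t) - gradient g x‖ * ‖y - x‖ := real_inner_le_norm _ _
    have hlipb : ‖gradient g (c t) - gradient g x‖ ≤ Lg * (t * ‖y - x‖) := by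
      have h5 := hlip (c t) x
      have h6 : c t - x = t • (y - x) := by simp [hc]
      rw [h6, norm_smul, Real.norm_eq_abs, abs_of_nonneg ht0] at h5
      linarith [h5]
    have hnn : 0 ≤ ‖y - x‖ := norm_nonneg _
    nlinarith [hCS, hlipb]
  have hrhs : ∫ t in (0:ℝ)..1, (⟪gradient g x, y - x⟫ + Lg * ‖y - x‖^2 * t)
      = ⟪gradient g x, y - x⟫ + Lg / 2 * ‖y - x‖^2 := by
    have hi2 : IntervalIntegrable (fun t : ℝ => Lg * ‖y - x‖^2 * t)
        MeasureTheory.volume 0 1 :=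
      Continuous.intervalIntegrable (by fun_prop) 0 1
    rw [intervalIntegral.integral_add intervalIntegrable_const hi2,
      intervalIntegral.integral_const]
    have h7 : ∫ t in (0:ℝ)..1, Lg * ‖y - x‖^2 * t
        = Lg * ‖y - x‖^2 * (((1:ℝ)^2 - 0^2)/2) := by
      rw [intervalIntegral.integral_const_mul, integral_id]
    rw [h7]
    norm_num
    ring
  rw [hc0, hc1] at heq
  linarith [heq ▸ hmono, hrhs ▸ hmono]

end analysis

section gradP

variable {d n : ℕ}

lemma gradient_P (f : Fin n → Vec d → ℝ) (hdiff : ∀ i, Differentiable ℝ (f i)) (x : Vec d) :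
    HasGradientAt (fun w => (n : ℝ)⁻¹ * ∑ i, f i w)
      ((n:ℝ)⁻¹ • ∑ i, gradient (f i) x) x := by
  have hF : HasFDerivAt (fun w : Vec d => ∑ i, f i w) (∑ i, fderiv ℝ (f i) x) x :=
    HasFDerivAt.fun_sum (fun i _ => (hdiff i x).hasFDerivAt)
  have hP : HasFDerivAt (fun w : Vec d => (n:ℝ)⁻¹ * ∑ i, f i w)
      ((n:ℝ)⁻¹ • ∑ i, fderiv ℝ (f i) x) x := hF.const_mul _
  have h2 := hasFDerivAt_iff_hasGradientAt.mp hP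
  have h3 : (InnerProductSpace.toDual ℝ (Vec d)).symm
        ((n:ℝ)⁻¹ • ∑ i, fderiv ℝ (f i) x)
      = (n:ℝ)⁻¹ • ∑ i, gradient (f i) x := by
    rw [map_smul, map_sum]
    rfl
  rwa [h3] at h2

lemma gradient_P_eq (f : Fin n → Vec d → ℝ) (hdiff : ∀ i, Differentiable ℝ (f i)) (x : Vec d) :
    gradient (fun w => (n : ℝ)⁻¹ * ∑ i, f i w) x = (n:ℝ)⁻¹ • ∑ i, gradient (f i) x :=
  (gradient_P f hdiff x).gradient

lemma gradP_lip (f : Fin n → Vec d → ℝ) (hdiff : ∀ i, Differentiable ℝ (f i)) {L : ℝ}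
    (hL : 0 ≤ L)
    (hsmooth : ∀ i (w w' : Vec d), ‖gradient (f i) w - gradient (f i) w'‖ ≤ L * ‖w - w'‖)
    (x y : Vec d) :
    ‖gradient (fun w => (n : ℝ)⁻¹ * ∑ i, f i w) x
      - gradient (fun w => (n : ℝ)⁻¹ * ∑ i, f i w) y‖ ≤ L * ‖x - y‖ := by
  rcases Nat.eq_zero_or_pos n with hn0 | hn
  · subst hn0
    rw [gradient_P_eq f hdiff, gradient_P_eq f hdiff]
    simp
    positivity
  have hnR : 0 < (n:ℝ) := by exact_mod_cast hn
  rw [gradient_P_eq f hdiff, gradient_P_eq f hdiff, ← smul_sub, ← Finset.sum_sub_distrib,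
    norm_smul, norm_inv, Real.norm_natCast]
  calc (↑n)⁻¹ * ‖∑ i, (gradient (f i) x - gradient (f i) y)‖
      ≤ (↑n)⁻¹ * ∑ i, ‖gradient (f i) x - gradient (f i) y‖ := by
        apply mul_le_mul_of_nonneg_left (norm_sum_le _ _) (by positivity)
    _ ≤ (↑n)⁻¹ * ∑ _i : Fin n, L * ‖x - y‖ := by
        apply mul_le_mul_of_nonneg_left (Finset.sum_le_sum fun i _ => hsmooth i x y)
          (by positivity)
    _ = L * ‖x - y‖ := by
        rw [Finset.sum_const, Finset.card_univ, Fintype.card_fin, nsmul_eq_mul]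
        field_simp

end gradP

section sarah

variable {d n : ℕ}

lemma sarahState_congr (f : Fin n → Vec d → ℝ) (w0 : Vec d) (η : ℝ) (b : ℕ)
    {I I' : ℕ → Finset (Fin n)} (k : ℕ) (h : ∀ j, 1 ≤ j → j ≤ k → I j = I' j) :
    sarahState f w0 η b I k = sarahState f w0 η b I' k := by
  induction k with
  | zero => rfl
  | succ k ih =>
    have hk := ih fun j h1 h2 => h j h1 (h2.trans (Nat.le_succ k))
    simp only [sarahState]
    rw [hk, h (k+1) (by omega) le_rfl]

lemma sum_update {b T : ℕ} (k : Fin T) (G : (Fin T → Batch n b) → ℝ) :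
    ∑ ω : Fin T → Batch n b, ∑ s : Batch n b, G (Function.update ω k s)
      = (Fintype.card (Batch n b) : ℝ) * ∑ ω, G ω := by
  rw [Finset.sum_comm]
  have e := Equiv.funSplitAt k (Batch n b)
  have h1 : ∀ s : Batch n b, ∀ a : Batch n b,
      ∀ h : {j : Fin T // j ≠ k} → Batch n b,
      Function.update ((Equiv.funSplitAt k (Batch n b)).symm (a, h)) k s
        = (Equiv.funSplitAt k (Batch n b)).symm (s, h) := by
    intro s a h
    funext j
    by_cases hj : j = k
    · subst hj
      simp [Equiv.funSplitAt_symm_apply]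
    · simp [Function.update, hj, Equiv.funSplitAt_symm_apply]
  have h2 : ∀ s : Batch n b, ∑ ω : Fin T → Batch n b, G (Function.update ω k s)
      = (Fintype.card (Batch n b) : ℝ) *
          ∑ h : {j : Fin T // j ≠ k} → Batch n b,
            G ((Equiv.funSplitAt k (Batch n b)).symm (s, h)) := by
    intro s
    rw [← Equiv.sum_comp (Equiv.funSplitAt k (Batch n b)).symm
      (fun ω => G (Function.update ω k s)), Fintype.sum_prod_type]
    rw [Finset.sum_congr rfl fun a _ => Finset.sum_congr rfl fun h _ => by rw [h1 s a h]]
    rw [Finset.sum_const, Finset.card_univ, nsmul_eq_mul]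
  rw [Finset.sum_congr rfl fun s _ => h2 s, ← Finset.mul_sum]
  congr 1
  exact (Fintype.sum_prod_type (f := fun p : Batch n b × ({j : Fin T // j ≠ k} → Batch n b) =>
    G ((Equiv.funSplitAt k (Batch n b)).symm p))).symm.trans
    (Equiv.sum_comp (Equiv.funSplitAt k (Batch n b)).symm G)

lemma pad_update_ne {b T : ℕ} (ω : Fin T → Batch n b) (k : Fin T) (s : Batch n b)
    {j : ℕ} (hj : j ≠ (k : ℕ)) : pad (Function.update ω k s) j = pad ω j := by
  unfold pad
  by_cases h : j < T
  · simp only [dif_pos h]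
    have hne : (⟨j, h⟩ : Fin T) ≠ k := by
      intro hc
      exact hj (by rw [← hc])
    rw [Function.update_of_ne hne]
  · simp [dif_neg h]

lemma pad_update_eq {b T : ℕ} (ω : Fin T → Batch n b) (k : Fin T) (s : Batch n b) :
    pad (Function.update ω k s) (k : ℕ) = s.1 := by
  unfold pad
  simp [k.isLt]

end sarah

section mainaux

variable {d n : ℕ}

/-- One conditional variance step of SARAH. -/
lemma Avar_step (f : Fin n → Vec d → ℝ) {L : ℝ} (hL : 0 < L)
    (hdiff : ∀ i, Differentiable ℝ (f i))
    (hsmooth : ∀ i (w w' : Vec d), ‖gradient (f i) w - gradient (f i) w'‖ ≤ L * ‖w - w'‖)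
    (P : Vec d → ℝ) (hP : P = fun w => (n : ℝ)⁻¹ * ∑ i, f i w)
    (w0 : Vec d) (η : ℝ) (b m : ℕ) (hb : 1 ≤ b) (hbn : b ≤ n) (hn : 2 ≤ n)
    (t : ℕ) (ht : t + 1 ≤ m) :
    expec (fun ω : Fin (m+1) → Batch n b =>
        ‖gradient P ((sarahState f w0 η b (pad ω) (t+1)).1)
          - (sarahState f w0 η b (pad ω) (t+1)).2‖^2)
      ≤ expec (fun ω : Fin (m+1) → Batch n b =>
          ‖gradient P ((sarahState f w0 η b (pad ω) t).1)
            - (sarahState f w0 η b (pad ω) t).2‖^2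
          + ((n:ℝ)-b)/((b:ℝ)*((n:ℝ)-1)) * (L^2 * η^2
              * ‖(sarahState f w0 η b (pad ω) t).2‖^2)) := by
  have hgradP : ∀ x, gradient P x = (n:ℝ)⁻¹ • ∑ i, gradient (f i) x := by
    intro x; rw [hP]; exact gradient_P_eq f hdiff x
  have hρ : 0 ≤ ((n:ℝ)-b)/((b:ℝ)*((n:ℝ)-1)) := by
    have h1 : (b:ℝ) ≤ (n:ℝ) := by exact_mod_cast hbn
    have h2 : (1:ℝ) ≤ (b:ℝ) := by exact_mod_cast hb
    have h3 : (2:ℝ) ≤ (n:ℝ) := by exact_mod_cast hn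
    apply div_nonneg (by linarith)
    nlinarith
  set ρ : ℝ := ((n:ℝ)-b)/((b:ℝ)*((n:ℝ)-1)) with hρdef
  have hBne : Nonempty (Batch n b) := batch_nonempty hbn
  have hcardB : (0:ℝ) < (Fintype.card (Batch n b) : ℝ) := by
    exact_mod_cast Fintype.card_pos
  set k : Fin (m+1) := ⟨t+1, by omega⟩ with hkdef
  have hkv : (k : ℕ) = t + 1 := rfl
  -- pointwise bound on the conditional sum
  have hpoint : ∀ ω : Fin (m+1) → Batch n b,
      ∑ s : Batch n b,
        ‖gradient P ((sarahState f w0 η b (pad (Function.update ω k s)) (t+1)).1)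
          - (sarahState f w0 η b (pad (Function.update ω k s)) (t+1)).2‖^2
      ≤ (Fintype.card (Batch n b) : ℝ) *
          (‖gradient P ((sarahState f w0 η b (pad ω) t).1)
            - (sarahState f w0 η b (pad ω) t).2‖^2
           + ρ * (L^2 * η^2 * ‖(sarahState f w0 η b (pad ω) t).2‖^2)) := by
    intro ω
    set w := (sarahState f w0 η b (pad ω) t).1 with hw
    set v := (sarahState f w0 η b (pad ω) t).2 with hv
    set w' := w - η • v with hw'
    have hstate : ∀ s : Batch n b,
        sarahState f w0 η b (pad (Function.update ω k s)) t
          = sarahState f w0 η b (pad ω) t := by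
      intro s
      refine sarahState_congr f w0 η b t fun j hj1 hj2 => ?_
      refine pad_update_ne ω k s ?_
      rw [hkv]; omega
    have hupd : ∀ s : Batch n b,
        sarahState f w0 η b (pad (Function.update ω k s)) (t+1)
          = (w', (b:ℝ)⁻¹ • ∑ i ∈ s.1,
              (gradient (f i) w' - gradient (f i) w) + v) := by
      intro s
      show (let p := sarahState f w0 η b (pad (Function.update ω k s)) t;
            let w'' := p.1 - η • p.2;
            (w'', (b:ℝ)⁻¹ • ∑ i ∈ pad (Function.update ω k s) (t+1),
              (gradient (f i) w'' - gradient (f i) p.1) + p.2)) = _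
      rw [hstate s]
      have hpk : pad (Function.update ω k s) (t+1) = s.1 := pad_update_eq ω k s
      rw [hpk]
    have hXbar : (n:ℝ)⁻¹ • ∑ i, (gradient (f i) w' - gradient (f i) w)
        = gradient P w' - gradient P w := by
      rw [Finset.sum_sub_distrib, smul_sub, ← hgradP, ← hgradP]
    have hob := batch_one_step hb hbn hn (gradient P w') v
      (fun i => gradient (f i) w' - gradient (f i) w)
    have hsum : ∑ s : Batch n b,
        ‖gradient P w' - ((b:ℝ)⁻¹ • ∑ i ∈ s.1,
          (gradient (f i) w' - gradient (f i) w) + v)‖^2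
        = (Fintype.card (Batch n b) : ℝ) *
          expec (fun s : Batch n b => ‖gradient P w' - ((b:ℝ)⁻¹ • ∑ i ∈ s.1,
            (gradient (f i) w' - gradient (f i) w) + v)‖^2) := by
      rw [expec, ← mul_assoc, mul_inv_cancel₀ (ne_of_gt hcardB), one_mul]
    have hfirst : gradient P w' - ((n:ℝ)⁻¹ • (∑ i, (gradient (f i) w' - gradient (f i) w)) + v)
        = gradient P w - v := by
      rw [hXbar]; abel
    have hvar_le : ρ * ((n:ℝ)⁻¹ * (∑ i, ‖gradient (f i) w' - gradient (f i) w‖^2)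
          - ‖(n:ℝ)⁻¹ • ∑ i, (gradient (f i) w' - gradient (f i) w)‖^2)
        ≤ ρ * (L^2 * η^2 * ‖v‖^2) := by
      apply mul_le_mul_of_nonneg_left _ hρ
      have hn0 : (0:ℝ) < (n:ℝ) := by
        have : (2:ℝ) ≤ (n:ℝ) := by exact_mod_cast hn
        linarith
      have hterm : ∀ i : Fin n, ‖gradient (f i) w' - gradient (f i) w‖^2
          ≤ L^2 * η^2 * ‖v‖^2 := by
        intro i
        have h1 := hsmooth i w' w
        have h2 : w' - w = -(η • v) := by rw [hw']; abel
        have h3 : ‖w' - w‖ = |η| * ‖v‖ := by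
          rw [h2, norm_neg, norm_smul, Real.norm_eq_abs]
        have h4 : ‖gradient (f i) w' - gradient (f i) w‖ ≤ L * (|η| * ‖v‖) := by
          rw [← h3]; exact h1
        have h5 : (0:ℝ) ≤ ‖gradient (f i) w' - gradient (f i) w‖ := norm_nonneg _
        calc ‖gradient (f i) w' - gradient (f i) w‖^2 ≤ (L * (|η| * ‖v‖))^2 := by
              apply sq_le_sq' _ h4
              nlinarith [mul_nonneg (mul_nonneg hL.le (abs_nonneg η)) (norm_nonneg v)]
          _ = L^2 * η^2 * ‖v‖^2 := by
              rw [mul_pow, mul_pow, sq_abs]; ring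
      calc (n:ℝ)⁻¹ * (∑ i, ‖gradient (f i) w' - gradient (f i) w‖^2)
            - ‖(n:ℝ)⁻¹ • ∑ i, (gradient (f i) w' - gradient (f i) w)‖^2
          ≤ (n:ℝ)⁻¹ * (∑ i, ‖gradient (f i) w' - gradient (f i) w‖^2) := by
            nlinarith [sq_nonneg ‖(n:ℝ)⁻¹ • ∑ i, (gradient (f i) w' - gradient (f i) w)‖]
        _ ≤ (n:ℝ)⁻¹ * (∑ _i : Fin n, L^2 * η^2 * ‖v‖^2) := by
            apply mul_le_mul_of_nonneg_left (Finset.sum_le_sum fun i _ => hterm i)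
              (by positivity)
        _ = L^2 * η^2 * ‖v‖^2 := by
            rw [Finset.sum_const, Finset.card_univ, Fintype.card_fin, nsmul_eq_mul]
            field_simp
    calc ∑ s : Batch n b,
        ‖gradient P ((sarahState f w0 η b (pad (Function.update ω k s)) (t+1)).1)
          - (sarahState f w0 η b (pad (Function.update ω k s)) (t+1)).2‖^2
        = ∑ s : Batch n b, ‖gradient P w' - ((b:ℝ)⁻¹ • ∑ i ∈ s.1,
            (gradient (f i) w' - gradient (f i) w) + v)‖^2 := by
          refine Finset.sum_congr rfl fun s _ => ?_
          rw [hupd s]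
      _ = (Fintype.card (Batch n b) : ℝ) *
          (‖gradient P w - v‖^2
            + ρ * ((n:ℝ)⁻¹ * (∑ i, ‖gradient (f i) w' - gradient (f i) w‖^2)
              - ‖(n:ℝ)⁻¹ • ∑ i, (gradient (f i) w' - gradient (f i) w)‖^2)) := by
          rw [hsum, hob, hfirst]
      _ ≤ (Fintype.card (Batch n b) : ℝ) *
          (‖gradient P w - v‖^2 + ρ * (L^2 * η^2 * ‖v‖^2)) := by
          apply mul_le_mul_of_nonneg_left _ hcardB.le
          linarith [hvar_le]
  -- now put everything together using sum_update
  have hupdsum := sum_update (n := n) k (fun ω : Fin (m+1) → Batch n b =>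
    ‖gradient P ((sarahState f w0 η b (pad ω) (t+1)).1)
      - (sarahState f w0 η b (pad ω) (t+1)).2‖^2)
  have hsums : (Fintype.card (Batch n b) : ℝ) *
      ∑ ω : Fin (m+1) → Batch n b,
        ‖gradient P ((sarahState f w0 η b (pad ω) (t+1)).1)
          - (sarahState f w0 η b (pad ω) (t+1)).2‖^2
      ≤ (Fintype.card (Batch n b) : ℝ) *
        ∑ ω : Fin (m+1) → Batch n b,
          (‖gradient P ((sarahState f w0 η b (pad ω) t).1)
            - (sarahState f w0 η b (pad ω) t).2‖^2
           + ρ * (L^2 * η^2 * ‖(sarahState f w0 η b (pad ω) t).2‖^2)) := by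
    rw [← hupdsum, Finset.mul_sum]
    exact Finset.sum_le_sum fun ω _ => hpoint ω
  have hsums' := (mul_le_mul_iff_right₀ hcardB).mp hsums
  rw [expec, expec]
  apply mul_le_mul_of_nonneg_left hsums'
  positivity

end mainaux

lemma expec_sum {Ω : Type*} [Fintype Ω] (k : ℕ) (F : ℕ → Ω → ℝ) :
    expec (fun ω => ∑ t ∈ Finset.range k, F t ω)
      = ∑ t ∈ Finset.range k, expec (F t) := by
  simp only [expec]
  rw [Finset.sum_comm, Finset.mul_sum]

set_option maxHeartbeats 1000000 in
/-- **Corollary 3 of SARAH (nonconvex).** -/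
theorem sarah_in_convergence_exact_eta
    {d n : ℕ} (hn : 2 ≤ n)
    (f : Fin n → Vec d → ℝ) (L : ℝ) (hL : 0 < L)
    (hdiff : ∀ i, Differentiable ℝ (f i))
    (hsmooth : ∀ i (w w' : Vec d),
      ‖gradient (f i) w - gradient (f i) w'‖ ≤ L * ‖w - w'‖)
    (P : Vec d → ℝ) (hP : P = fun w => (n : ℝ)⁻¹ * ∑ i, f i w)
    (wstar : Vec d) (hmin : ∀ w, P wstar ≤ P w)
    (w0 : Vec d) (η : ℝ) (b m : ℕ) (hb : 1 ≤ b) (hbn : b ≤ n)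
    (hηdef : η = 2 / (L * (Real.sqrt (1 + 4 * (m : ℝ) / (b : ℝ)
      * (((n : ℝ) - (b : ℝ)) / ((n : ℝ) - 1))) + 1))) :
    expec (fun p : (Fin (m + 1) → Batch n b) × Fin (m + 1) =>
        ‖gradient P ((sarahState f w0 η b (pad p.1) (p.2 : ℕ)).1)‖ ^ 2)
      ≤ L * (Real.sqrt (1 + 4 * (m : ℝ) / (b : ℝ)
          * (((n : ℝ) - (b : ℝ)) / ((n : ℝ) - 1))) + 1) / ((m : ℝ) + 1)
          * (P w0 - P wstar) := by
  -- basic numeric facts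
  have hnR : (2:ℝ) ≤ (n:ℝ) := by exact_mod_cast hn
  have hbR : (1:ℝ) ≤ (b:ℝ) := by exact_mod_cast hb
  have hbnR : (b:ℝ) ≤ (n:ℝ) := by exact_mod_cast hbn
  have hn1R : (0:ℝ) < (n:ℝ) - 1 := by linarith
  set ρ : ℝ := ((n:ℝ)-(b:ℝ))/((b:ℝ)*((n:ℝ)-1)) with hρdef
  have hρ0 : 0 ≤ ρ := by
    rw [hρdef]; apply div_nonneg (by linarith); nlinarith
  set σ : ℝ := Real.sqrt (1 + 4 * (m : ℝ) / (b : ℝ)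
      * (((n : ℝ) - (b : ℝ)) / ((n : ℝ) - 1))) with hσdef
  have hfac : 0 ≤ 4 * (m : ℝ) / (b : ℝ) * (((n : ℝ) - (b : ℝ)) / ((n : ℝ) - 1)) := by
    have h1 : 0 ≤ 4*(m:ℝ)/(b:ℝ) := by positivity
    have h2 : 0 ≤ ((n:ℝ)-(b:ℝ))/((n:ℝ)-1) := div_nonneg (by linarith) (by linarith)
    exact mul_nonneg h1 h2
  have harg : 4 * (m : ℝ) / (b : ℝ) * (((n : ℝ) - (b : ℝ)) / ((n : ℝ) - 1))
      = 4 * (m:ℝ) * ρ := by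
    rw [hρdef]; field_simp
  have hσ1 : 1 ≤ σ := by
    have h0 : (0:ℝ) ≤ 1 + 4 * (m : ℝ) / (b : ℝ)
        * (((n : ℝ) - (b : ℝ)) / ((n : ℝ) - 1)) := by linarith
    have hs1 := Real.sq_sqrt h0
    have hs2 := Real.sqrt_nonneg (1 + 4 * (m : ℝ) / (b : ℝ)
        * (((n : ℝ) - (b : ℝ)) / ((n : ℝ) - 1)))
    rw [hσdef]
    nlinarith [hs1, hs2, hfac]
  have hσsq : σ^2 = 1 + 4*(m:ℝ)*ρ := by
    rw [hσdef, Real.sq_sqrt (by linarith), harg]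
  have hσ1p : (0:ℝ) < σ + 1 := by linarith
  have hηpos : 0 < η := by rw [hηdef]; positivity
  have hLη : L * η = 2/(σ+1) := by
    rw [hηdef]; field_simp
  have hkey : (m:ℝ) * ρ * (L^2 * η^2) = 1 - L*η := by
    have h1 : L^2*η^2 = (L*η)^2 := by ring
    rw [h1, hLη]
    have hσne : σ + 1 ≠ 0 := ne_of_gt hσ1p
    field_simp
    nlinarith [hσsq]
  -- gradient facts
  have hgradP : ∀ x, gradient P x = (n:ℝ)⁻¹ • ∑ i, gradient (f i) x := by
    intro x; rw [hP]; exact gradient_P_eq f hdiff x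
  have hPdiff : Differentiable ℝ P := by
    rw [hP]; exact fun x => (gradient_P f hdiff x).differentiableAt
  have hPlip : ∀ x y : Vec d, ‖gradient P x - gradient P y‖ ≤ L * ‖x - y‖ := by
    intro x y; rw [hP]; exact gradP_lip f hdiff hL.le hsmooth x y
  have hdescent := descent_lemma hL.le hPdiff hPlip
  -- nonemptiness
  have hBne : Nonempty (Batch n b) := batch_nonempty hbn
  have hΩne : Nonempty (Fin (m+1) → Batch n b) := ⟨fun _ => hBne.some⟩
  -- per-trajectory one-step descent
  have hstep : ∀ (ω : Fin (m+1) → Batch n b) (t : ℕ),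
      P ((sarahState f w0 η b (pad ω) (t+1)).1)
        ≤ P ((sarahState f w0 η b (pad ω) t).1)
          - η/2 * ‖gradient P ((sarahState f w0 η b (pad ω) t).1)‖^2
          - (η/2)*(1 - L*η) * ‖(sarahState f w0 η b (pad ω) t).2‖^2
          + η/2 * ‖gradient P ((sarahState f w0 η b (pad ω) t).1)
              - (sarahState f w0 η b (pad ω) t).2‖^2 := by
    intro ω t
    set x := (sarahState f w0 η b (pad ω) t).1 with hx
    set v := (sarahState f w0 η b (pad ω) t).2 with hvv
    have hWt1 : (sarahState f w0 η b (pad ω) (t+1)).1 = x - η • v := rfl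
    have hd := hdescent x (x - η • v)
    have hyx : (x - η • v) - x = -(η • v) := by abel
    have hinn : ⟪gradient P x, (x - η • v) - x⟫ = -(η * ⟪gradient P x, v⟫) := by
      rw [hyx, inner_neg_right, real_inner_smul_right]
    have hnrm : ‖(x - η • v) - x‖^2 = η^2 * ‖v‖^2 := by
      rw [hyx, norm_neg, norm_smul, Real.norm_eq_abs, mul_pow, sq_abs]
    have h3 : 2*⟪gradient P x, v⟫ = ‖gradient P x‖^2 + ‖v‖^2 - ‖gradient P x - v‖^2 := by
      have := norm_sub_sq_real (gradient P x) v
      linarith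
    rw [hWt1]
    rw [hinn, hnrm] at hd
    have h4 : η * (2*⟪gradient P x, v⟫)
        = η * (‖gradient P x‖^2 + ‖v‖^2 - ‖gradient P x - v‖^2) := by rw [h3]
    linarith [hd, h4]
  -- telescoping
  have htel : ∀ (ω : Fin (m+1) → Batch n b) (k : ℕ),
      P ((sarahState f w0 η b (pad ω) k).1)
        ≤ P w0
          - η/2 * ∑ t ∈ Finset.range k,
              ‖gradient P ((sarahState f w0 η b (pad ω) t).1)‖^2
          - (η/2)*(1 - L*η) * ∑ t ∈ Finset.range k,
              ‖(sarahState f w0 η b (pad ω) t).2‖^2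
          + η/2 * ∑ t ∈ Finset.range k,
              ‖gradient P ((sarahState f w0 η b (pad ω) t).1)
                - (sarahState f w0 η b (pad ω) t).2‖^2 := by
    intro ω k
    induction k with
    | zero => simp only [Finset.range_zero, Finset.sum_empty]; norm_num; exact le_of_eq rfl
    | succ k ih =>
      have h1 := hstep ω k
      rw [Finset.sum_range_succ, Finset.sum_range_succ, Finset.sum_range_succ]
      nlinarith [h1, ih]
  -- the three expectation sequences
  set A : ℕ → ℝ := fun t => expec (fun ω : Fin (m+1) → Batch n b =>
    ‖gradient P ((sarahState f w0 η b (pad ω) t).1)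
      - (sarahState f w0 η b (pad ω) t).2‖^2) with hAdef
  set B : ℕ → ℝ := fun t => expec (fun ω : Fin (m+1) → Batch n b =>
    ‖(sarahState f w0 η b (pad ω) t).2‖^2) with hBdef
  set G : ℕ → ℝ := fun t => expec (fun ω : Fin (m+1) → Batch n b =>
    ‖gradient P ((sarahState f w0 η b (pad ω) t).1)‖^2) with hGdef
  have hBnn : ∀ t, 0 ≤ B t := by
    intro t; rw [hBdef]; exact expec_nonneg fun ω => by positivity
  have hGnn : ∀ t, 0 ≤ G t := by
    intro t; rw [hGdef]; exact expec_nonneg fun ω => by positivity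
  have hA0 : A 0 = 0 := by
    rw [hAdef]
    have h0 : ∀ ω : Fin (m+1) → Batch n b,
        ‖gradient P ((sarahState f w0 η b (pad ω) 0).1)
          - (sarahState f w0 η b (pad ω) 0).2‖^2 = 0 := by
      intro ω
      have h1 : (sarahState f w0 η b (pad ω) 0).2
          = (n:ℝ)⁻¹ • ∑ i, gradient (f i) w0 := rfl
      have h2 : (sarahState f w0 η b (pad ω) 0).1 = w0 := rfl
      rw [h1, h2, hgradP w0]
      simp
    simp only [h0]
    simp [expec]
  have hAstep : ∀ t, t + 1 ≤ m → A (t+1) ≤ A t + ρ * (L^2 * η^2 * B t) := by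
    intro t ht
    have h := Avar_step f hL hdiff hsmooth P hP w0 η b m hb hbn hn t ht
    rw [hAdef, hBdef]
    calc expec (fun ω : Fin (m+1) → Batch n b =>
        ‖gradient P ((sarahState f w0 η b (pad ω) (t+1)).1)
          - (sarahState f w0 η b (pad ω) (t+1)).2‖^2)
        ≤ expec (fun ω : Fin (m+1) → Batch n b =>
          ‖gradient P ((sarahState f w0 η b (pad ω) t).1)
            - (sarahState f w0 η b (pad ω) t).2‖^2
          + ρ * (L^2 * η^2 * ‖(sarahState f w0 η b (pad ω) t).2‖^2)) := h
      _ = _ := by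
          rw [expec_add]
          congr 1
          rw [show (fun ω : Fin (m+1) → Batch n b =>
              ρ * (L^2 * η^2 * ‖(sarahState f w0 η b (pad ω) t).2‖^2))
            = (fun ω : Fin (m+1) → Batch n b =>
              (ρ * (L^2 * η^2)) * ‖(sarahState f w0 η b (pad ω) t).2‖^2) by
            funext ω; ring]
          rw [expec_mul_left]
          ring
  have hAbound : ∀ t, t ≤ m → A t ≤ ρ * (L^2 * η^2) * ∑ j ∈ Finset.range t, B j := by
    intro t
    induction t with
    | zero => intro _; rw [hA0]; simp
    | succ t ih =>
      intro ht
      have h1 := hAstep t ht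
      have h2 := ih (by omega)
      rw [Finset.sum_range_succ]
      ring_nf at h1 h2 ⊢
      linarith
  -- total variance bound
  have hAsum : ∑ t ∈ Finset.range (m+1), A t
      ≤ ρ * (L^2 * η^2) * ((m:ℝ) * ∑ t ∈ Finset.range (m+1), B t) := by
    have hinner : ∑ t ∈ Finset.range (m+1), ∑ j ∈ Finset.range t, B j
        ≤ (m:ℝ) * ∑ t ∈ Finset.range (m+1), B t := by
      rw [Finset.sum_range_succ']
      simp only [Finset.range_zero, Finset.sum_empty, add_zero]
      calc ∑ t ∈ Finset.range m, ∑ j ∈ Finset.range (t+1), B j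
          ≤ ∑ _t ∈ Finset.range m, ∑ j ∈ Finset.range (m+1), B j := by
            apply Finset.sum_le_sum
            intro t htm
            apply Finset.sum_le_sum_of_subset_of_nonneg
            · apply Finset.range_subset_range.mpr
              rw [Finset.mem_range] at htm
              omega
            · intro j _ _; exact hBnn j
        _ = (m:ℝ) * ∑ j ∈ Finset.range (m+1), B j := by
            rw [Finset.sum_const, Finset.card_range, nsmul_eq_mul]
    calc ∑ t ∈ Finset.range (m+1), A t
        ≤ ∑ t ∈ Finset.range (m+1), ρ * (L^2 * η^2) * ∑ j ∈ Finset.range t, B j := by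
          apply Finset.sum_le_sum
          intro t htm
          exact hAbound t (by rw [Finset.mem_range] at htm; omega)
      _ = ρ * (L^2 * η^2) * ∑ t ∈ Finset.range (m+1), ∑ j ∈ Finset.range t, B j := by
          rw [Finset.mul_sum]
      _ ≤ _ := by
          apply mul_le_mul_of_nonneg_left hinner (by positivity)
  -- expectation of the telescoped inequality
  have hmain : η/2 * ∑ t ∈ Finset.range (m+1), G t
      + (η/2)*(1 - L*η) * ∑ t ∈ Finset.range (m+1), B t
      - η/2 * ∑ t ∈ Finset.range (m+1), A t
      ≤ P w0 - P wstar := by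
    have hpw : ∀ ω : Fin (m+1) → Batch n b,
        η/2 * (∑ t ∈ Finset.range (m+1),
            ‖gradient P ((sarahState f w0 η b (pad ω) t).1)‖^2)
          + ((η/2)*(1 - L*η)) * (∑ t ∈ Finset.range (m+1),
              ‖(sarahState f w0 η b (pad ω) t).2‖^2)
          - η/2 * (∑ t ∈ Finset.range (m+1),
              ‖gradient P ((sarahState f w0 η b (pad ω) t).1)
                - (sarahState f w0 η b (pad ω) t).2‖^2)
        ≤ P w0 - P wstar := by
      intro ω
      have h1 := htel ω (m+1)
      have h2 := hmin ((sarahState f w0 η b (pad ω) (m+1)).1)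
      linarith
    have hmono := expec_mono (F := fun ω : Fin (m+1) → Batch n b =>
        η/2 * (∑ t ∈ Finset.range (m+1),
            ‖gradient P ((sarahState f w0 η b (pad ω) t).1)‖^2)
          + ((η/2)*(1 - L*η)) * (∑ t ∈ Finset.range (m+1),
              ‖(sarahState f w0 η b (pad ω) t).2‖^2)
          - η/2 * (∑ t ∈ Finset.range (m+1),
              ‖gradient P ((sarahState f w0 η b (pad ω) t).1)
                - (sarahState f w0 η b (pad ω) t).2‖^2))
      (G := fun _ => P w0 - P wstar) hpw
    rw [expec_const] at hmono
    rw [expec_sub, expec_add] at hmono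
    rw [expec_mul_left, expec_mul_left, expec_mul_left] at hmono
    rw [expec_sum, expec_sum, expec_sum] at hmono
    rw [hAdef, hBdef, hGdef]
    linarith [hmono]
  -- conclude Σ G ≤ (2/η)(P w0 - P wstar)
  have hGsum : ∑ t ∈ Finset.range (m+1), G t ≤ 2/η * (P w0 - P wstar) := by
    have hAB : η/2 * (∑ t ∈ Finset.range (m+1), A t)
        ≤ (η/2)*(1 - L*η) * ∑ t ∈ Finset.range (m+1), B t := by
      have heq : ρ * (L^2 * η^2) * ((m:ℝ) * ∑ t ∈ Finset.range (m+1), B t)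
          = (1 - L*η) * ∑ t ∈ Finset.range (m+1), B t := by
        linear_combination (∑ t ∈ Finset.range (m+1), B t) * hkey
      have h1 := hAsum
      rw [heq] at h1
      nlinarith [h1, hηpos]
    have h2 : η/2 * ∑ t ∈ Finset.range (m+1), G t ≤ P w0 - P wstar := by
      linarith [hmain, hAB]
    rw [div_mul_eq_mul_div, le_div_iff₀ hηpos]
    linarith [h2]
  -- rewrite the top-level expectation over the product space
  have hLHS : expec (fun p : (Fin (m + 1) → Batch n b) × Fin (m + 1) =>
        ‖gradient P ((sarahState f w0 η b (pad p.1) (p.2 : ℕ)).1)‖ ^ 2)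
      = ((m:ℝ)+1)⁻¹ * ∑ t ∈ Finset.range (m+1), G t := by
    rw [expec, Fintype.card_prod, Fintype.card_fin, Fintype.sum_prod_type]
    have hfin : ∀ ω : Fin (m+1) → Batch n b,
        ∑ i : Fin (m+1), ‖gradient P ((sarahState f w0 η b (pad ω) (i:ℕ)).1)‖^2
          = ∑ t ∈ Finset.range (m+1),
              ‖gradient P ((sarahState f w0 η b (pad ω) t).1)‖^2 := by
      intro ω
      exact Fin.sum_univ_eq_sum_range
        (fun t => ‖gradient P ((sarahState f w0 η b (pad ω) t).1)‖^2) (m+1)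
    rw [Finset.sum_congr rfl fun ω _ => hfin ω]
    rw [Finset.sum_comm]
    rw [hGdef]
    simp only [expec]
    rw [Finset.mul_sum, Finset.mul_sum]
    apply Finset.sum_congr rfl
    intro t _
    push_cast
    rw [mul_inv]
    ring
  rw [hLHS]
  have h2η : 2/η = L * (σ + 1) := by
    rw [hηdef]
    field_simp
  have hfinal : ((m:ℝ)+1)⁻¹ * ∑ t ∈ Finset.range (m+1), G t
      ≤ ((m:ℝ)+1)⁻¹ * (2/η * (P w0 - P wstar)) := by
    apply mul_le_mul_of_nonneg_left hGsum (by positivity)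
  calc ((m:ℝ)+1)⁻¹ * ∑ t ∈ Finset.range (m+1), G t
      ≤ ((m:ℝ)+1)⁻¹ * (2/η * (P w0 - P wstar)) := hfinal
    _ = L * (σ + 1) / ((m:ℝ)+1) * (P w0 - P wstar) := by
        rw [h2η]
        ring
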